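/- Let K be algebraically closed and I = (f_1, …, f_r) ⊴ K[x]. Then V*(I) is closed under matrix multiplication if and only if f_i(xy) ∈ √(Î_xy) for every 1 ≤ i ≤ r, where f_i(xy) ∈ K[x̂, ŷ] denotes the polynomial obtained from f_i by substituting for each indeterminate x_k the corresponding entry of the product X·Y of the matrix X of x-indeterminates with the matrix Y of y-indeterminates. -/

import Mathlib

open MvPolynomial

/-- Evaluation of a polynomial in the `n²` indeterminates at an `n × n` matrix. -/
noncomputable def matEval {n : ℕ} {K : Type*} [Field K] (v : Matrix (Fin n) (Fin n) K) :
    MvPolynomial (Fin n × Fin n) K →+* K :=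
  MvPolynomial.eval (fun p => v p.1 p.2)

/-- `V(I)`: the matrices annihilating every polynomial of `I`. -/
def Vset {n : ℕ} {K : Type*} [Field K] (I : Ideal (MvPolynomial (Fin n × Fin n) K)) :
    Set (Matrix (Fin n) (Fin n) K) :=
  {v | ∀ f ∈ I, matEval v f = 0}

/-- `V*(I) = V(I) ∩ GL(n,K)`: the invertible matrices in `V(I)`. -/
def Vstar {n : ℕ} {K : Type*} [Field K] (I : Ideal (MvPolynomial (Fin n × Fin n) K)) :
    Set (Matrix (Fin n) (Fin n) K) :=
  {v | v ∈ Vset I ∧ IsUnit v}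

/-- `det(x)`, the determinant of the matrix of indeterminates. -/
noncomputable def detPoly (n : ℕ) (K : Type*) [Field K] : MvPolynomial (Fin n × Fin n) K :=
  (Matrix.of fun i j => MvPolynomial.X (i, j)).det

/-- `f₀ = x₀ · det(x) − 1 ∈ K[x̂]`, where `x₀` is the extra indeterminate `none`. -/
noncomputable def fzero (n : ℕ) (K : Type*) [Field K] :
    MvPolynomial (Option (Fin n × Fin n)) K :=
  MvPolynomial.X none * MvPolynomial.rename some (detPoly n K) - 1

/-- `Î = I·K[x̂] + (f₀)`. -/
noncomputable def Ihat {n : ℕ} {K : Type*} [Field K]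
    (I : Ideal (MvPolynomial (Fin n × Fin n) K)) :
    Ideal (MvPolynomial (Option (Fin n × Fin n)) K) :=
  Ideal.map (MvPolynomial.rename (some : Fin n × Fin n → Option (Fin n × Fin n))) I
    ⊔ Ideal.span {fzero n K}

/-- Evaluation of a polynomial in `K[x̂]` at a pair `(v₀, v) ∈ K ⊕ K^{n×n}`. -/
noncomputable def hatEval {n : ℕ} {K : Type*} [Field K] (v₀ : K)
    (v : Matrix (Fin n) (Fin n) K) :
    MvPolynomial (Option (Fin n × Fin n)) K →+* K :=
  MvPolynomial.eval (fun o : Option (Fin n × Fin n) => o.elim v₀ (fun p => v p.1 p.2))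

/-- `V(Ĵ) ⊆ K ⊕ K^{n×n}` for an ideal `Ĵ ⊴ K[x̂]`. -/
def VhatSet {n : ℕ} {K : Type*} [Field K]
    (J : Ideal (MvPolynomial (Option (Fin n × Fin n)) K)) :
    Set (K × Matrix (Fin n) (Fin n) K) :=
  {p | ∀ f ∈ J, hatEval p.1 p.2 f = 0}

/-- `Î_xy = Î·K[x̂,ŷ] + φ(Î)·K[x̂,ŷ] ⊴ K[x̂,ŷ]`, where the left summand of the
variable type is `x̂` and the right one is `ŷ`. -/
noncomputable def Ihatxy {n : ℕ} {K : Type*} [Field K]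
    (I : Ideal (MvPolynomial (Fin n × Fin n) K)) :
    Ideal (MvPolynomial (Option (Fin n × Fin n) ⊕ Option (Fin n × Fin n)) K) :=
  Ideal.map (MvPolynomial.rename
      (Sum.inl : Option (Fin n × Fin n) → Option (Fin n × Fin n) ⊕ Option (Fin n × Fin n)))
      (Ihat I)
    ⊔ Ideal.map (MvPolynomial.rename
      (Sum.inr : Option (Fin n × Fin n) → Option (Fin n × Fin n) ⊕ Option (Fin n × Fin n)))
      (Ihat I)

/-- The `n × n` matrix `X` of `x`-indeterminates, inside `K[x̂,ŷ]`. -/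
noncomputable def Xmat (n : ℕ) (K : Type*) [Field K] :
    Matrix (Fin n) (Fin n)
      (MvPolynomial (Option (Fin n × Fin n) ⊕ Option (Fin n × Fin n)) K) :=
  Matrix.of fun i j => MvPolynomial.X (Sum.inl (some (i, j)))

/-- The `n × n` matrix `Y` of `y`-indeterminates, inside `K[x̂,ŷ]`. -/
noncomputable def Ymat (n : ℕ) (K : Type*) [Field K] :
    Matrix (Fin n) (Fin n)
      (MvPolynomial (Option (Fin n × Fin n) ⊕ Option (Fin n × Fin n)) K) :=
  Matrix.of fun i j => MvPolynomial.X (Sum.inr (some (i, j)))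

/-- The substitution `f ↦ f(xy)`: each indeterminate `x_k` is replaced by the
corresponding entry of the product `X·Y` of the matrix of `x`-indeterminates
with the matrix of `y`-indeterminates. -/
noncomputable def prodSubst (n : ℕ) (K : Type*) [Field K] :
    MvPolynomial (Fin n × Fin n) K →ₐ[K]
      MvPolynomial (Option (Fin n × Fin n) ⊕ Option (Fin n × Fin n)) K :=
  MvPolynomial.aeval (fun p : Fin n × Fin n => (Xmat n K * Ymat n K) p.1 p.2)

section Aux

variable {n : ℕ} {K : Type*} [Field K]

lemma matEval_detPoly (v : Matrix (Fin n) (Fin n) K) : matEval v (detPoly n K) = v.det := by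
  rw [detPoly, matEval, RingHom.map_det]
  congr 1
  ext i j
  simp [Matrix.map_apply]

lemma hatEval_rename_some (v₀ : K) (v : Matrix (Fin n) (Fin n) K)
    (g : MvPolynomial (Fin n × Fin n) K) :
    hatEval v₀ v (rename some g) = matEval v g := by
  simp only [hatEval, matEval, eval_rename]
  rfl

lemma hatEval_fzero (v₀ : K) (v : Matrix (Fin n) (Fin n) K) :
    hatEval v₀ v (fzero n K) = v₀ * v.det - 1 := by
  rw [fzero, map_sub, map_mul, map_one, hatEval_rename_some, matEval_detPoly]
  congr 1
  simp [hatEval]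

lemma hatEval_ihat_iff (I : Ideal (MvPolynomial (Fin n × Fin n) K)) (v₀ : K)
    (v : Matrix (Fin n) (Fin n) K) :
    (∀ g ∈ Ihat I, hatEval v₀ v g = 0) ↔ (v ∈ Vset I ∧ v₀ * v.det = 1) := by
  constructor
  · intro h
    refine ⟨fun g hg => ?_, ?_⟩
    · rw [← hatEval_rename_some v₀ v g]
      exact h _ (Ideal.mem_sup_left (Ideal.mem_map_of_mem _ hg))
    · have h0 := h _ (Ideal.mem_sup_right (Ideal.subset_span rfl))
      rw [hatEval_fzero] at h0
      exact sub_eq_zero.mp h0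
  · rintro ⟨hv, hdet⟩ g hg
    have hker : Ihat I ≤ RingHom.ker (hatEval v₀ v) := by
      rw [Ihat]
      refine sup_le ?_ ?_
      · rw [Ideal.map_le_iff_le_comap]
        intro g hg
        rw [Ideal.mem_comap, RingHom.mem_ker, hatEval_rename_some]
        exact hv g hg
      · rw [Ideal.span_le]
        intro x hx
        rw [Set.mem_singleton_iff] at hx
        subst hx
        rw [SetLike.mem_coe, RingHom.mem_ker, hatEval_fzero, hdet, sub_self]
    exact hker hg

/-- The point of `K^{x̂,ŷ}` given by `(v₀, v, w₀, w)`. -/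
noncomputable def pt (v₀ : K) (v : Matrix (Fin n) (Fin n) K) (w₀ : K)
    (w : Matrix (Fin n) (Fin n) K) :
    (Option (Fin n × Fin n) ⊕ Option (Fin n × Fin n)) → K :=
  Sum.elim (fun o => o.elim v₀ fun p => v p.1 p.2) (fun o => o.elim w₀ fun p => w p.1 p.2)

lemma eval_pt_inl (v₀ w₀ : K) (v w : Matrix (Fin n) (Fin n) K)
    (g : MvPolynomial (Option (Fin n × Fin n)) K) :
    eval (pt v₀ v w₀ w) (rename Sum.inl g) = hatEval v₀ v g := by
  rw [eval_rename]; rfl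

lemma eval_pt_inr (v₀ w₀ : K) (v w : Matrix (Fin n) (Fin n) K)
    (g : MvPolynomial (Option (Fin n × Fin n)) K) :
    eval (pt v₀ v w₀ w) (rename Sum.inr g) = hatEval w₀ w g := by
  rw [eval_rename]; rfl

lemma eval_eq_aeval {τ : Type*} (F : τ → K) (g : MvPolynomial τ K) :
    eval F g = aeval F g := by
  rw [aeval_def, Algebra.algebraMap_self]; rfl

lemma eval_pt_prodSubst (v₀ w₀ : K) (v w : Matrix (Fin n) (Fin n) K)
    (g : MvPolynomial (Fin n × Fin n) K) :
    eval (pt v₀ v w₀ w) (prodSubst n K g) = matEval (v * w) g := by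
  have key : (fun k : Fin n × Fin n =>
      aeval (R := K) (pt v₀ v w₀ w) ((Xmat n K * Ymat n K) k.1 k.2))
      = fun k : Fin n × Fin n => (v * w) k.1 k.2 := by
    funext k
    simp [Xmat, Ymat, Matrix.mul_apply, pt]
  rw [prodSubst, eval_eq_aeval, comp_aeval_apply, key, matEval]
  rw [eval_eq_aeval]

end Aux

/-- `V*(I)` is closed under multiplication iff `fᵢ(xy) ∈ √(Î_xy)` for every `i`. -/
theorem stmt11 {n : ℕ} (hn : 1 ≤ n) {K : Type*} [Field K] [IsAlgClosed K]
    (r : ℕ) (f : Fin r → MvPolynomial (Fin n × Fin n) K)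
    (I : Ideal (MvPolynomial (Fin n × Fin n) K)) (hI : I = Ideal.span (Set.range f)) :
    (∀ v ∈ Vstar I, ∀ w ∈ Vstar I, v * w ∈ Vstar I) ↔
      (∀ i : Fin r, prodSubst n K (f i) ∈ (Ihatxy I).radical) := by
  constructor
  · intro hcl i
    rw [← vanishingIdeal_zeroLocus_eq_radical (K := K), mem_vanishingIdeal_iff]
    intro P hP
    rw [mem_zeroLocus_iff] at hP
    set v₀ := P (Sum.inl none) with hv₀
    set w₀ := P (Sum.inr none) with hw₀
    set v : Matrix (Fin n) (Fin n) K := Matrix.of fun i j => P (Sum.inl (some (i, j))) with hvdef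
    set w : Matrix (Fin n) (Fin n) K := Matrix.of fun i j => P (Sum.inr (some (i, j))) with hwdef
    have hPpt : P = pt v₀ v w₀ w := by
      funext s
      rcases s with o | o <;> rcases o with _ | p <;> rfl
    rw [hPpt] at hP
    have hv : v ∈ Vset I ∧ v₀ * v.det = 1 := by
      rw [← hatEval_ihat_iff]
      intro g hg
      rw [← eval_pt_inl v₀ w₀ v w]
      exact hP _ (Ideal.mem_sup_left (Ideal.mem_map_of_mem _ hg))
    have hw : w ∈ Vset I ∧ w₀ * w.det = 1 := by
      rw [← hatEval_ihat_iff]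
      intro g hg
      rw [← eval_pt_inr v₀ w₀ v w]
      exact hP _ (Ideal.mem_sup_right (Ideal.mem_map_of_mem _ hg))
    have hvU : IsUnit v := (Matrix.isUnit_iff_isUnit_det v).mpr
      (IsUnit.of_mul_eq_one v₀ (by rw [mul_comm]; exact hv.2))
    have hwU : IsUnit w := (Matrix.isUnit_iff_isUnit_det w).mpr
      (IsUnit.of_mul_eq_one w₀ (by rw [mul_comm]; exact hw.2))
    have hmul := hcl v ⟨hv.1, hvU⟩ w ⟨hw.1, hwU⟩
    have hfi : f i ∈ I := by
      rw [hI]; exact Ideal.subset_span ⟨i, rfl⟩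
    rw [hPpt, ← eval_eq_aeval, eval_pt_prodSubst]
    exact hmul.1 _ hfi
  · rintro hrad v ⟨hvV, hvU⟩ w ⟨hwV, hwU⟩
    have hvd : v.det ≠ 0 := ((Matrix.isUnit_iff_isUnit_det v).mp hvU).ne_zero
    have hwd : w.det ≠ 0 := ((Matrix.isUnit_iff_isUnit_det w).mp hwU).ne_zero
    set v₀ := v.det⁻¹ with hv₀
    set w₀ := w.det⁻¹ with hw₀
    have hker : Ihatxy I ≤ RingHom.ker
        (eval (pt v₀ v w₀ w) : MvPolynomial _ K →+* K) := by
      rw [Ihatxy]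
      refine sup_le ?_ ?_
      · rw [Ideal.map_le_iff_le_comap]
        intro g hg
        rw [Ideal.mem_comap, RingHom.mem_ker, eval_pt_inl]
        exact (hatEval_ihat_iff I v₀ v).mpr ⟨hvV, inv_mul_cancel₀ hvd⟩ g hg
      · rw [Ideal.map_le_iff_le_comap]
        intro g hg
        rw [Ideal.mem_comap, RingHom.mem_ker, eval_pt_inr]
        exact (hatEval_ihat_iff I w₀ w).mpr ⟨hwV, inv_mul_cancel₀ hwd⟩ g hg
    have hprime : (RingHom.ker (eval (pt v₀ v w₀ w) :
        MvPolynomial _ K →+* K)).IsPrime := RingHom.ker_isPrime _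
    have hradker : (Ihatxy I).radical ≤ RingHom.ker
        (eval (pt v₀ v w₀ w) : MvPolynomial _ K →+* K) := by
      calc (Ihatxy I).radical ≤ (RingHom.ker (eval (pt v₀ v w₀ w) :
            MvPolynomial _ K →+* K)).radical := Ideal.radical_mono hker
        _ = _ := hprime.radical
    refine ⟨?_, hvU.mul hwU⟩
    intro g hg
    have hle : I ≤ RingHom.ker (matEval (v * w)) := by
      rw [hI, Ideal.span_le]
      rintro _ ⟨i, rfl⟩
      rw [SetLike.mem_coe, RingHom.mem_ker, ← eval_pt_prodSubst v₀ w₀ v w]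
      exact hradker (hrad i)
    exact hle hg
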